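/- Let B, J, A ∈ ℝ^{n×n}, let s be a random vector distributed according to the standard Gaussian measure on ℝⁿ, and let B' = AAA(B, J, s). Then E[‖B' − A‖_F] ≤ (1 − 1/(2n)) ‖B − A‖_F + (2 − 1/(2n)) ‖J − A‖_F. -/

import Mathlib

open Matrix MeasureTheory ProbabilityTheory Finset

/-- Euclidean norm of a vector in ℝⁿ. -/
noncomputable def enorm' {n : ℕ} (v : Fin n → ℝ) : ℝ := Real.sqrt (∑ i, (v i) ^ 2)

/-- Frobenius norm of a real n×n matrix. -/
noncomputable def frob {n : ℕ} (A : Matrix (Fin n) (Fin n) ℝ) : ℝ :=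
  Real.sqrt (∑ i, ∑ j, (A i j) ^ 2)

/-- Spectral (ℓ₂ operator) norm of a real n×n matrix. -/
noncomputable def opNorm' {n : ℕ} (A : Matrix (Fin n) (Fin n) ℝ) : ℝ :=
  ‖Matrix.toEuclideanCLM (𝕜 := ℝ) A‖

/-- The AAA update: AAA(B,J,s) = B + ((J−B) s sᵀ (J−B)ᵀ / (sᵀ(J−B)ᵀ(J−B)s)) (J−B)
if (J−B)s ≠ 0, and B otherwise. -/
noncomputable def AAAupd {n : ℕ} (B J : Matrix (Fin n) (Fin n) ℝ) (s : Fin n → ℝ) :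
    Matrix (Fin n) (Fin n) ℝ :=
  if (J - B).mulVec s = 0 then B
  else B + (((J - B).mulVec s) ⬝ᵥ ((J - B).mulVec s))⁻¹ •
      (Matrix.vecMulVec ((J - B).mulVec s) ((J - B).mulVec s) * (J - B))

/-- `s` is a standard basis vector maximizing ‖R e_i‖ over the standard basis. -/
noncomputable def IsGreedy {n : ℕ} (R : Matrix (Fin n) (Fin n) ℝ) (s : Fin n → ℝ) : Prop :=
  ∃ i : Fin n, s = Pi.single i 1 ∧
    ∀ j : Fin n, enorm' (R.mulVec (Pi.single j 1)) ≤ enorm' (R.mulVec (Pi.single i 1))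

/-- `P` is the orthogonal-projection matrix onto the subspace `V` of ℝⁿ
(symmetric, idempotent, range `V`, identity on `V`). -/
def IsOrthProj {n : ℕ} (P : Matrix (Fin n) (Fin n) ℝ) (V : Submodule ℝ (Fin n → ℝ)) : Prop :=
  P.IsSymm ∧ P * P = P ∧ (∀ v, P.mulVec v ∈ V) ∧ (∀ v ∈ V, P.mulVec v = v)

/-- Standard Gaussian measure on ℝⁿ: the n-fold product of N(0,1). -/
noncomputable def stdGaussianPi (n : ℕ) : MeasureTheory.Measure (Fin n → ℝ) :=
  MeasureTheory.Measure.pi fun _ => ProbabilityTheory.gaussianReal 0 1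

open scoped NNReal

namespace AAAProofAux

section frobsec

attribute [local instance] Matrix.frobeniusSeminormedAddCommGroup

variable {n : ℕ}

lemma frob_eq_norm (A : Matrix (Fin n) (Fin n) ℝ) : frob A = ‖A‖ := by
  rw [frob, Matrix.frobenius_norm_def, Real.sqrt_eq_rpow]
  congr 1
  refine Finset.sum_congr rfl fun i _ => Finset.sum_congr rfl fun j _ => ?_
  show A i j ^ 2 = ‖A i j‖ ^ 2
  rw [Real.norm_eq_abs, show ((2:ℝ)) = ((2:ℕ):ℝ) by norm_num, Real.rpow_natCast, sq_abs]

lemma frob_nonneg (A : Matrix (Fin n) (Fin n) ℝ) : 0 ≤ frob A := Real.sqrt_nonneg _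

lemma frob_sub_le (X Y : Matrix (Fin n) (Fin n) ℝ) : frob (X - Y) ≤ frob X + frob Y := by
  simp only [frob_eq_norm]; exact norm_sub_le X Y

lemma frob_sq (A : Matrix (Fin n) (Fin n) ℝ) : frob A ^ 2 = ∑ i, ∑ j, (A i j)^2 := by
  rw [frob, Real.sq_sqrt]; positivity

lemma eq_zero_of_sum_sq {ι : Type*} [Fintype ι] {f : ι → ℝ} (h : ∑ i, f i ^ 2 = 0) (i : ι) :
    f i = 0 := by
  have := (Finset.sum_eq_zero_iff_of_nonneg (fun j _ => sq_nonneg (f j))).1 h i (Finset.mem_univ i)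
  exact pow_eq_zero_iff (two_ne_zero) |>.1 this

lemma frob_eq_zero {A : Matrix (Fin n) (Fin n) ℝ} (h : frob A = 0) : A = 0 := by
  have h2 : ∑ i, ∑ j, (A i j) ^ 2 = 0 := by
    have := frob_sq A; rw [h] at this; linarith [this.symm]
  ext i j
  have hi : ∑ j, (A i j) ^ 2 = 0 := by
    have hnn : ∀ i ∈ (Finset.univ : Finset (Fin n)), 0 ≤ ∑ j, (A i j)^2 :=
      fun i _ => by positivity
    exact (Finset.sum_eq_zero_iff_of_nonneg hnn).1 h2 i (Finset.mem_univ i)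
  simpa using eq_zero_of_sum_sq hi j

lemma sqrt_sub_le {a b : ℝ} (ha : 0 < a) (hb : 0 ≤ b) (hba : b ≤ a ^ 2) :
    Real.sqrt (a ^ 2 - b) ≤ a - b / (2 * a) := by
  have h1 : 0 ≤ a - b / (2 * a) := by
    rw [sub_nonneg, div_le_iff₀ (by linarith)]
    nlinarith
  have hkey : (a - b / (2 * a)) ^ 2 = a ^ 2 - b + b ^ 2 / (4 * a ^ 2) := by
    field_simp
    ring
  have h2 : a ^ 2 - b ≤ (a - b / (2 * a)) ^ 2 := by
    rw [hkey]
    have : 0 ≤ b ^ 2 / (4 * a ^ 2) := by positivity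
    linarith
  calc Real.sqrt (a ^ 2 - b) ≤ Real.sqrt ((a - b / (2 * a)) ^ 2) := Real.sqrt_le_sqrt h2
    _ = a - b / (2 * a) := Real.sqrt_sq h1

end frobsec

section alg

variable {n : ℕ} (R : Matrix (Fin n) (Fin n) ℝ) (v : Fin n → ℝ)

lemma mulVec_apply' (i : Fin n) : R.mulVec v i = ∑ j, R i j * v j := rfl

-- ∑_j w_j v_j = U
lemma alg_wv : ∑ j, (∑ k, R.mulVec v k * R k j) * v j = ∑ i, (R.mulVec v i) ^ 2 := by
  simp_rw [Finset.sum_mul]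
  rw [Finset.sum_comm]
  refine Finset.sum_congr rfl fun k _ => ?_
  simp_rw [mul_assoc]
  rw [← Finset.mul_sum, sq]
  rfl

-- Cauchy-Schwarz: U^2 ≤ W * D
lemma alg_CS : (∑ i, (R.mulVec v i) ^ 2) ^ 2 ≤
    (∑ j, (∑ k, R.mulVec v k * R k j) ^ 2) * (∑ i, (v i) ^ 2) := by
  rw [← alg_wv R v]
  exact Finset.sum_mul_sq_le_sq_mul_sq _ _ _

-- U ≤ S * D
lemma alg_USD : (∑ i, (R.mulVec v i) ^ 2) ≤ (∑ i, ∑ j, (R i j) ^ 2) * ∑ i, (v i) ^ 2 := by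
  rw [Finset.sum_mul]
  refine Finset.sum_le_sum fun i _ => ?_
  rw [mulVec_apply']
  exact Finset.sum_mul_sq_le_sq_mul_sq _ _ _

-- main identity
lemma key_identity (hU : (∑ i, (R.mulVec v i) ^ 2) ≠ 0) :
    ∑ i, ∑ j, (R i j - (∑ i, (R.mulVec v i) ^ 2)⁻¹ *
        (R.mulVec v i * ∑ k, R.mulVec v k * R k j)) ^ 2
      = (∑ i, ∑ j, (R i j) ^ 2)
        - (∑ j, (∑ k, R.mulVec v k * R k j) ^ 2) / (∑ i, (R.mulVec v i) ^ 2) := by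
  set u : Fin n → ℝ := R.mulVec v with hu
  set U : ℝ := ∑ i, (u i) ^ 2 with hUdef
  set w : Fin n → ℝ := fun j => ∑ k, u k * R k j with hw
  have expand : ∀ i j, (R i j - U⁻¹ * (u i * w j)) ^ 2
      = R i j ^ 2 - (2 * U⁻¹) * (u i * (R i j * w j)) + U⁻¹ ^ 2 * (u i ^ 2 * w j ^ 2) :=
    fun i j => by ring
  have h1 : ∑ i, ∑ j, u i * (R i j * w j) = ∑ j, (w j) ^ 2 := by
    rw [Finset.sum_comm]
    refine Finset.sum_congr rfl fun j _ => ?_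
    simp_rw [← mul_assoc]
    rw [← Finset.sum_mul, sq]
  have h2 : ∑ i, ∑ j, u i ^ 2 * w j ^ 2 = U * ∑ j, (w j) ^ 2 := by
    rw [hUdef, Finset.sum_mul_sum]
  calc ∑ i, ∑ j, (R i j - U⁻¹ * (u i * w j)) ^ 2
      = ∑ i, ∑ j, (R i j ^ 2 - (2 * U⁻¹) * (u i * (R i j * w j))
          + U⁻¹ ^ 2 * (u i ^ 2 * w j ^ 2)) := by
        exact Finset.sum_congr rfl fun i _ => Finset.sum_congr rfl fun j _ => expand i j
    _ = (∑ i, ∑ j, R i j ^ 2) - (2 * U⁻¹) * (∑ i, ∑ j, u i * (R i j * w j))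
          + U⁻¹ ^ 2 * (∑ i, ∑ j, u i ^ 2 * w j ^ 2) := by
        simp only [Finset.sum_add_distrib, Finset.sum_sub_distrib, ← Finset.mul_sum]
    _ = (∑ i, ∑ j, R i j ^ 2) - (2 * U⁻¹) * (∑ j, (w j) ^ 2)
          + U⁻¹ ^ 2 * (U * ∑ j, (w j) ^ 2) := by rw [h1, h2]
    _ = (∑ i, ∑ j, R i j ^ 2) - (∑ j, (w j) ^ 2) / U := by
        field_simp
        ring

end alg


section meas

variable {n : ℕ}

instance stdGaussianPi_prob (n : ℕ) : IsProbabilityMeasure (stdGaussianPi n) := by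
  unfold stdGaussianPi; infer_instance

lemma meas_ratio (j k : Fin n) :
    Measurable fun v : Fin n → ℝ => v j * v k / ∑ i, (v i) ^ 2 :=
  ((measurable_pi_apply j).mul (measurable_pi_apply k)).div
    (Finset.measurable_sum _ fun i _ => (measurable_pi_apply i).pow_const 2)

lemma ratio_abs_le (j k : Fin n) (v : Fin n → ℝ) : |v j * v k / ∑ i, (v i) ^ 2| ≤ 1 := by
  rcases eq_or_ne (∑ i, (v i) ^ 2) 0 with h | h
  · simp [h]
  · have hD : 0 < ∑ i, (v i) ^ 2 := lt_of_le_of_ne (by positivity) (Ne.symm h)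
    rw [abs_div, abs_of_pos hD, div_le_one hD, abs_mul]
    have h1 : (v j) ^ 2 ≤ ∑ i, (v i) ^ 2 :=
      Finset.single_le_sum (f := fun i => (v i) ^ 2) (fun i _ => sq_nonneg _) (Finset.mem_univ j)
    have h2 : (v k) ^ 2 ≤ ∑ i, (v i) ^ 2 :=
      Finset.single_le_sum (f := fun i => (v i) ^ 2) (fun i _ => sq_nonneg _) (Finset.mem_univ k)
    nlinarith [abs_nonneg (v j), abs_nonneg (v k), sq_abs (v j), sq_abs (v k),
      sq_nonneg (|v j| - |v k|)]

lemma integrable_ratio (j k : Fin n) :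
    Integrable (fun v => v j * v k / ∑ i, (v i) ^ 2) (stdGaussianPi n) := by
  refine Integrable.mono' (integrable_const 1) (meas_ratio j k).aestronglyMeasurable ?_
  exact ae_of_all _ fun v => by rw [Real.norm_eq_abs]; exact ratio_abs_le j k v

lemma integral_ratio_ne {j k : Fin n} (hjk : j ≠ k) :
    ∫ v, v j * v k / ∑ i, (v i) ^ 2 ∂(stdGaussianPi n) = 0 := by
  classical
  set e : ∀ _ : Fin n, ℝ ≃ᵐ ℝ := fun i =>
    if i = j then (Homeomorph.neg ℝ).toMeasurableEquiv else MeasurableEquiv.refl ℝ with he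
  set T : (Fin n → ℝ) ≃ᵐ (Fin n → ℝ) := MeasurableEquiv.piCongrRight e with hT
  have hTapp : ∀ (v : Fin n → ℝ) (i : Fin n), T v i = if i = j then -(v i) else v i := by
    intro v i
    show e i (v i) = _
    by_cases hi : i = j <;> simp [he, hi]
  have hmp : MeasurePreserving T (stdGaussianPi n) (stdGaussianPi n) := by
    have hcoord : ∀ i : Fin n,
        MeasurePreserving (fun x : ℝ => e i x) (gaussianReal 0 1) (gaussianReal 0 1) := by
      intro i
      by_cases hi : i = j
      · refine ⟨(e i).measurable, ?_⟩
        have hfun : (fun x : ℝ => e i x) = fun x : ℝ => (-1 : ℝ) * x := by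
          funext x; simp [he, hi]
        rw [hfun]
        have := gaussianReal_map_const_mul (μ := 0) (v := 1) (-1 : ℝ)
        have h1 : (⟨(-1 : ℝ) ^ 2, sq_nonneg _⟩ : ℝ≥0) = (1 : ℝ≥0) := by
          ext; norm_num
        rw [this]
        congr 1
        · simp
        · ext; norm_num
      · refine ⟨(e i).measurable, ?_⟩
        have hfun : (fun x : ℝ => e i x) = id := by funext x; simp [he, hi]
        rw [hfun, Measure.map_id]
    exact measurePreserving_pi _ _ hcoord
  have h2 := hmp.integral_comp' (g := fun v => v j * v k / ∑ i, (v i) ^ 2)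
  have h3 : ∀ v : Fin n → ℝ,
      (T v) j * (T v) k / (∑ i, ((T v) i) ^ 2) = -(v j * v k / ∑ i, (v i) ^ 2) := by
    intro v
    have hsum : ∑ i, ((T v) i) ^ 2 = ∑ i, (v i) ^ 2 := by
      refine Finset.sum_congr rfl fun i _ => ?_
      rw [hTapp]
      by_cases hi : i = j <;> simp [hi]
    rw [hsum, hTapp, hTapp, if_pos rfl, if_neg (fun h : k = j => hjk h.symm), neg_mul, neg_div]
  simp only [h3] at h2
  rw [integral_neg] at h2
  linarith

lemma integral_diag_eq (j k : Fin n) :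
    ∫ v, (v j) ^ 2 / ∑ i, (v i) ^ 2 ∂(stdGaussianPi n)
      = ∫ v, (v k) ^ 2 / ∑ i, (v i) ^ 2 ∂(stdGaussianPi n) := by
  classical
  set e : Fin n ≃ Fin n := Equiv.swap j k with he
  have hmp := measurePreserving_piCongrLeft (fun _ : Fin n => gaussianReal 0 1) e
  set T := MeasurableEquiv.piCongrLeft (fun _ : Fin n => ℝ) e with hT
  have hTapp : ∀ (v : Fin n → ℝ) (i : Fin n), T v (e i) = v i := fun v i =>
    MeasurableEquiv.piCongrLeft_apply_apply (β := fun _ : Fin n => ℝ) e v i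
  have hmp' : MeasurePreserving T (stdGaussianPi n) (stdGaussianPi n) := hmp
  have h2 := hmp'.integral_comp' (g := fun v => (v j) ^ 2 / ∑ i, (v i) ^ 2)
  have h3 : ∀ v : Fin n → ℝ,
      ((T v) j) ^ 2 / (∑ i, ((T v) i) ^ 2) = (v k) ^ 2 / ∑ i, (v i) ^ 2 := by
    intro v
    have hsum : ∑ i, ((T v) i) ^ 2 = ∑ i, (v i) ^ 2 := by
      rw [← Equiv.sum_comp e (fun i => ((T v) i) ^ 2)]
      exact Finset.sum_congr rfl fun i _ => by rw [hTapp]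
    have hj : (T v) j = v k := by
      have : e k = j := Equiv.swap_apply_right j k
      rw [← this, hTapp]
    rw [hj, hsum]
  simp only [h3] at h2
  exact h2.symm

lemma ae_sum_sq_ne (hn : 0 < n) :
    ∀ᵐ v ∂(stdGaussianPi n), ∑ i, (v i) ^ 2 ≠ 0 := by
  classical
  set j0 : Fin n := ⟨0, hn⟩
  have h0 : stdGaussianPi n {v : Fin n → ℝ | v j0 = 0} = 0 := by
    have hset : {v : Fin n → ℝ | v j0 = 0}
        = Set.pi Set.univ (fun i => if i = j0 then ({0} : Set ℝ) else Set.univ) := by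
      ext v
      simp only [Set.mem_setOf_eq, Set.mem_pi, Set.mem_univ, forall_true_left]
      constructor
      · intro h i
        by_cases hi : i = j0 <;> simp [hi, h]
      · intro h
        have := h j0
        simpa using this
    rw [hset, stdGaussianPi, Measure.pi_pi]
    refine Finset.prod_eq_zero (Finset.mem_univ j0) ?_
    simp only [if_pos rfl]
    exact gaussianReal_absolutelyContinuous 0 one_ne_zero Real.volume_singleton
  rw [ae_iff]
  refine measure_mono_null ?_ h0
  intro v hv
  simp only [Set.mem_setOf_eq, not_not] at hv
  exact eq_zero_of_sum_sq hv j0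

lemma integral_diag (hn : 0 < n) (j : Fin n) :
    ∫ v, (v j) ^ 2 / ∑ i, (v i) ^ 2 ∂(stdGaussianPi n) = 1 / n := by
  have hint : ∀ k : Fin n, Integrable (fun v => (v k) ^ 2 / ∑ i, (v i) ^ 2) (stdGaussianPi n) := by
    intro k
    have := integrable_ratio (n := n) k k
    simpa [sq] using this
  have hsum : ∑ k : Fin n, ∫ v, (v k) ^ 2 / ∑ i, (v i) ^ 2 ∂(stdGaussianPi n) = 1 := by
    rw [← integral_finset_sum _ (fun k _ => hint k)]
    have hae : ∀ᵐ v ∂(stdGaussianPi n), ∑ k : Fin n, (v k) ^ 2 / ∑ i, (v i) ^ 2 = 1 :=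
      (ae_sum_sq_ne hn).mono fun v hv => by rw [← Finset.sum_div, div_self hv]
    rw [integral_congr_ae hae]
    simp
  have hall : ∀ k : Fin n, ∫ v, (v k) ^ 2 / ∑ i, (v i) ^ 2 ∂(stdGaussianPi n)
      = ∫ v, (v j) ^ 2 / ∑ i, (v i) ^ 2 ∂(stdGaussianPi n) := fun k => integral_diag_eq k j
  rw [Finset.sum_congr rfl (fun k _ => hall k), Finset.sum_const, Finset.card_univ,
    Fintype.card_fin, nsmul_eq_mul] at hsum
  have hn' : (n : ℝ) ≠ 0 := Nat.cast_ne_zero.2 hn.ne'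
  field_simp at hsum ⊢
  linarith

lemma integral_ratio (hn : 0 < n) (j k : Fin n) :
    ∫ v, v j * v k / ∑ i, (v i) ^ 2 ∂(stdGaussianPi n)
      = if j = k then 1 / (n : ℝ) else 0 := by
  by_cases hjk : j = k
  · subst hjk
    rw [if_pos rfl, ← integral_diag hn j]
    refine integral_congr_ae (ae_of_all _ fun v => ?_)
    simp [sq]
  · rw [if_neg hjk]
    exact integral_ratio_ne hjk

end meas

section intq

variable {n : ℕ}

lemma integral_q (hn : 0 < n) (R : Matrix (Fin n) (Fin n) ℝ) :
    ∫ v, (∑ i, (R.mulVec v i) ^ 2) / (∑ i, (v i) ^ 2) ∂(stdGaussianPi n)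
      = (∑ i, ∑ j, (R i j) ^ 2) / n := by
  classical
  have hpt : ∀ v : Fin n → ℝ, (∑ i, (R.mulVec v i) ^ 2) / (∑ i, (v i) ^ 2)
      = ∑ i, ∑ j, ∑ k, (R i j * R i k) * (v j * v k / ∑ l, (v l) ^ 2) := by
    intro v
    rcases eq_or_ne (∑ l, (v l) ^ 2) 0 with h | h
    · have hz : ∀ l, v l = 0 := eq_zero_of_sum_sq h
      simp [h, hz]
    · have hnum : ∑ i, (R.mulVec v i) ^ 2 = ∑ i, ∑ j, ∑ k, (R i j * R i k) * (v j * v k) := by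
        refine Finset.sum_congr rfl fun i _ => ?_
        rw [mulVec_apply', sq, Finset.sum_mul_sum]
        exact Finset.sum_congr rfl fun j _ => Finset.sum_congr rfl fun k _ => by ring
      rw [hnum, Finset.sum_div]
      refine Finset.sum_congr rfl fun i _ => ?_
      rw [Finset.sum_div]
      refine Finset.sum_congr rfl fun j _ => ?_
      rw [Finset.sum_div]
      exact Finset.sum_congr rfl fun k _ => mul_div_assoc _ _ _
  simp only [hpt]
  have hint2 : ∀ (i j k : Fin n),
      Integrable (fun v : Fin n → ℝ => (R i j * R i k) * (v j * v k / ∑ l, (v l) ^ 2))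
        (stdGaussianPi n) := fun i j k => (integrable_ratio j k).const_mul _
  have hint1 : ∀ (i j : Fin n),
      Integrable (fun v : Fin n → ℝ => ∑ k, (R i j * R i k) * (v j * v k / ∑ l, (v l) ^ 2))
        (stdGaussianPi n) := fun i j => integrable_finset_sum _ fun k _ => hint2 i j k
  have hint0 : ∀ (i : Fin n),
      Integrable (fun v : Fin n → ℝ => ∑ j, ∑ k, (R i j * R i k) * (v j * v k / ∑ l, (v l) ^ 2))
        (stdGaussianPi n) := fun i => integrable_finset_sum _ fun j _ => hint1 i j
  rw [integral_finset_sum _ fun i _ => hint0 i]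
  have hval : ∀ i : Fin n,
      ∫ v, ∑ j, ∑ k, (R i j * R i k) * (v j * v k / ∑ l, (v l) ^ 2) ∂(stdGaussianPi n)
        = (∑ j, R i j ^ 2) / n := by
    intro i
    rw [integral_finset_sum _ fun j _ => hint1 i j]
    have : ∀ j : Fin n,
        ∫ v, ∑ k, (R i j * R i k) * (v j * v k / ∑ l, (v l) ^ 2) ∂(stdGaussianPi n)
          = R i j ^ 2 / n := by
      intro j
      rw [integral_finset_sum _ fun k _ => hint2 i j k]
      have hterm : ∀ k : Fin n,
          ∫ v, (R i j * R i k) * (v j * v k / ∑ l, (v l) ^ 2) ∂(stdGaussianPi n)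
            = (R i j * R i k) * if j = k then 1 / (n : ℝ) else 0 := by
        intro k
        rw [integral_const_mul, integral_ratio hn j k]
      rw [Finset.sum_congr rfl fun k _ => hterm k]
      simp [Finset.mul_sum, mul_ite, mul_zero, Finset.sum_ite_eq, sq, mul_one_div, div_eq_mul_inv]
    rw [Finset.sum_congr rfl fun j _ => this j, ← Finset.sum_div]
  rw [Finset.sum_congr rfl fun i _ => hval i, ← Finset.sum_div]

lemma measurable_mulVec_entry (R : Matrix (Fin n) (Fin n) ℝ) (i : Fin n) :
    Measurable fun v : Fin n → ℝ => R.mulVec v i := by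
  simp only [mulVec_apply']
  exact Finset.measurable_sum _ fun j _ => (measurable_pi_apply j).const_mul _

lemma measurableSet_mulVec_zero (R : Matrix (Fin n) (Fin n) ℝ) :
    MeasurableSet {v : Fin n → ℝ | R.mulVec v = 0} := by
  have : {v : Fin n → ℝ | R.mulVec v = 0} = ⋂ i, {v | R.mulVec v i = 0} := by
    ext v; simp [funext_iff]
  rw [this]
  exact MeasurableSet.iInter fun i =>
    (measurable_mulVec_entry R i) (measurableSet_singleton 0)

end intq


section main

variable {n : ℕ}

lemma corr_apply (R : Matrix (Fin n) (Fin n) ℝ) (v : Fin n → ℝ) (i j : Fin n) :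
    ((R.mulVec v ⬝ᵥ R.mulVec v)⁻¹ • (Matrix.vecMulVec (R.mulVec v) (R.mulVec v) * R)) i j
      = (∑ l, (R.mulVec v l) ^ 2)⁻¹ * (R.mulVec v i * ∑ k, R.mulVec v k * R k j) := by
  have hdot : R.mulVec v ⬝ᵥ R.mulVec v = ∑ l, (R.mulVec v l) ^ 2 := by
    simp [dotProduct, sq]
  rw [Matrix.smul_apply, hdot, smul_eq_mul]
  congr 1
  rw [Matrix.mul_apply, Finset.mul_sum]
  exact Finset.sum_congr rfl fun k _ => by rw [Matrix.vecMulVec_apply]; ring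

lemma AAA_sub_eq (B J A : Matrix (Fin n) (Fin n) ℝ) (v : Fin n → ℝ)
    (h : ¬ (J - B).mulVec v = 0) :
    AAAupd B J v - A = (J - A) - ((J - B) - (((J - B).mulVec v) ⬝ᵥ ((J - B).mulVec v))⁻¹ •
      (Matrix.vecMulVec ((J - B).mulVec v) ((J - B).mulVec v) * (J - B))) := by
  rw [AAAupd, if_neg h]
  abel

lemma U_pos {R : Matrix (Fin n) (Fin n) ℝ} {v : Fin n → ℝ} (hR : ¬ R.mulVec v = 0) :
    0 < ∑ i, (R.mulVec v i) ^ 2 := by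
  refine lt_of_le_of_ne (by positivity) fun h => hR (funext fun i => ?_)
  exact eq_zero_of_sum_sq h.symm i

lemma frob_corr (R : Matrix (Fin n) (Fin n) ℝ) (v : Fin n → ℝ) (hR : ¬ R.mulVec v = 0) :
    frob (R - (R.mulVec v ⬝ᵥ R.mulVec v)⁻¹ • (Matrix.vecMulVec (R.mulVec v) (R.mulVec v) * R))
      = Real.sqrt ((∑ i, ∑ j, (R i j) ^ 2)
          - (∑ j, (∑ k, R.mulVec v k * R k j) ^ 2) / (∑ i, (R.mulVec v i) ^ 2)) := by
  have hU : (∑ i, (R.mulVec v i) ^ 2) ≠ 0 := (U_pos hR).ne'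
  rw [frob]
  congr 1
  rw [← key_identity R v hU]
  refine Finset.sum_congr rfl fun i _ => Finset.sum_congr rfl fun j _ => ?_
  rw [Matrix.sub_apply, corr_apply]

lemma main_bound_all (B J A : Matrix (Fin n) (Fin n) ℝ) (v : Fin n → ℝ) :
    frob (AAAupd B J v - A) ≤ frob (J - A) + frob (J - B) := by
  by_cases h : (J - B).mulVec v = 0
  · rw [AAAupd, if_pos h]
    have hBA : B - A = (J - A) - (J - B) := by abel
    rw [hBA]
    exact frob_sub_le _ _
  · rw [AAA_sub_eq B J A v h]
    refine le_trans (frob_sub_le _ _) (add_le_add le_rfl ?_)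
    rw [frob_corr _ _ h]
    have hS : frob (J - B) = Real.sqrt (∑ i, ∑ j, ((J - B) i j) ^ 2) := rfl
    rw [hS]
    apply Real.sqrt_le_sqrt
    have hU := U_pos h
    have hW : (0:ℝ) ≤ ∑ j, (∑ k, (J - B).mulVec v k * (J - B) k j) ^ 2 := by positivity
    have hdiv : (0:ℝ) ≤ (∑ j, (∑ k, (J - B).mulVec v k * (J - B) k j) ^ 2)
        / (∑ i, ((J - B).mulVec v i) ^ 2) := div_nonneg hW hU.le
    linarith

lemma main_bound_ae (B J A : Matrix (Fin n) (Fin n) ℝ) (hfR : frob (J - B) ≠ 0)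
    (v : Fin n → ℝ) (hv : ∑ i, (v i) ^ 2 ≠ 0) :
    frob (AAAupd B J v - A) ≤ frob (J - A) + frob (J - B)
      - (2 * frob (J - B))⁻¹ * ((∑ i, ((J - B).mulVec v i) ^ 2) / (∑ i, (v i) ^ 2)) := by
  have hfpos : 0 < frob (J - B) := lt_of_le_of_ne (frob_nonneg _) (Ne.symm hfR)
  have hD : 0 < ∑ i, (v i) ^ 2 := lt_of_le_of_ne (by positivity) (Ne.symm hv)
  by_cases h : (J - B).mulVec v = 0
  · have hq : (∑ i, ((J - B).mulVec v i) ^ 2) = 0 := by simp [h]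
    rw [hq]
    simpa using main_bound_all B J A v
  · have hU := U_pos h
    rw [AAA_sub_eq B J A v h]
    refine le_trans (frob_sub_le _ _) ?_
    rw [frob_corr _ _ h]
    have hCS := alg_CS (J - B) v
    have hUSD := alg_USD (J - B) v
    have hqW : (∑ i, ((J - B).mulVec v i) ^ 2) / (∑ i, (v i) ^ 2)
        ≤ (∑ j, (∑ k, (J - B).mulVec v k * (J - B) k j) ^ 2)
          / (∑ i, ((J - B).mulVec v i) ^ 2) := by
      rw [div_le_div_iff₀ hD hU]
      nlinarith [hCS]
    have hstep1 : Real.sqrt ((∑ i, ∑ j, ((J - B) i j) ^ 2)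
          - (∑ j, (∑ k, (J - B).mulVec v k * (J - B) k j) ^ 2) / (∑ i, ((J - B).mulVec v i) ^ 2))
        ≤ Real.sqrt ((∑ i, ∑ j, ((J - B) i j) ^ 2)
          - (∑ i, ((J - B).mulVec v i) ^ 2) / (∑ i, (v i) ^ 2)) :=
      Real.sqrt_le_sqrt (by linarith)
    have hq0 : (0:ℝ) ≤ (∑ i, ((J - B).mulVec v i) ^ 2) / (∑ i, (v i) ^ 2) := by positivity
    have hqS : (∑ i, ((J - B).mulVec v i) ^ 2) / (∑ i, (v i) ^ 2) ≤ frob (J - B) ^ 2 := by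
      rw [frob_sq, div_le_iff₀ hD]
      exact hUSD
    have hstep2 : Real.sqrt (frob (J - B) ^ 2
          - (∑ i, ((J - B).mulVec v i) ^ 2) / (∑ i, (v i) ^ 2))
        ≤ frob (J - B)
          - ((∑ i, ((J - B).mulVec v i) ^ 2) / (∑ i, (v i) ^ 2)) / (2 * frob (J - B)) :=
      sqrt_sub_le hfpos hq0 hqS
    rw [frob_sq] at hstep2
    have hrw : ((∑ i, ((J - B).mulVec v i) ^ 2) / (∑ i, (v i) ^ 2)) / (2 * frob (J - B))
        = (2 * frob (J - B))⁻¹ * ((∑ i, ((J - B).mulVec v i) ^ 2) / (∑ i, (v i) ^ 2)) := by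
      rw [div_eq_inv_mul]
    rw [hrw] at hstep2
    linarith

lemma measurable_f (B J A : Matrix (Fin n) (Fin n) ℝ) :
    Measurable fun v : Fin n → ℝ => frob (AAAupd B J v - A) := by
  classical
  have hEntry : ∀ i j : Fin n, Measurable fun v : Fin n → ℝ => (AAAupd B J v - A) i j := by
    intro i j
    have hfun : (fun v : Fin n → ℝ => (AAAupd B J v - A) i j)
        = fun v => (if (J - B).mulVec v = 0 then B i j
            else B i j + ((J - B).mulVec v ⬝ᵥ (J - B).mulVec v)⁻¹ *
              ((Matrix.vecMulVec ((J - B).mulVec v) ((J - B).mulVec v) * (J - B)) i j)) - A i j := by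
      funext v
      rw [AAAupd]
      split
      · rfl
      · rfl
    rw [hfun]
    refine Measurable.sub ?_ measurable_const
    refine Measurable.ite (measurableSet_mulVec_zero (J - B)) measurable_const ?_
    refine Measurable.add measurable_const (Measurable.mul ?_ ?_)
    · refine Measurable.inv ?_
      have hdot : (fun v : Fin n → ℝ => (J - B).mulVec v ⬝ᵥ (J - B).mulVec v)
          = fun v => ∑ l, ((J - B).mulVec v l) * ((J - B).mulVec v l) := rfl
      rw [hdot]
      exact Finset.measurable_sum _ fun l _ =>
        (measurable_mulVec_entry _ l).mul (measurable_mulVec_entry _ l)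
    · have hprod : (fun v : Fin n → ℝ =>
            (Matrix.vecMulVec ((J - B).mulVec v) ((J - B).mulVec v) * (J - B)) i j)
          = fun v => ∑ k, ((J - B).mulVec v i * (J - B).mulVec v k) * (J - B) k j := rfl
      rw [hprod]
      exact Finset.measurable_sum _ fun k _ =>
        ((measurable_mulVec_entry _ i).mul (measurable_mulVec_entry _ k)).mul_const _
  have hfr : (fun v : Fin n → ℝ => frob (AAAupd B J v - A))
      = fun v => Real.sqrt (∑ i, ∑ j, ((AAAupd B J v - A) i j) ^ 2) := rfl
  rw [hfr]
  exact Real.continuous_sqrt.measurable.comp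
    (Finset.measurable_sum _ fun i _ =>
      Finset.measurable_sum _ fun j _ => (hEntry i j).pow_const 2)

theorem stmt_16_aux (hn : 0 < n) (B J A : Matrix (Fin n) (Fin n) ℝ) :
    ∫ v, frob (AAAupd B J v - A) ∂(stdGaussianPi n) ≤
      (1 - 1 / (2 * (n : ℝ))) * frob (B - A) + (2 - 1 / (2 * (n : ℝ))) * frob (J - A) := by
  classical
  have hn1 : (1:ℝ) ≤ (n:ℝ) := by exact_mod_cast hn
  have hnpos : (0:ℝ) < (n:ℝ) := by linarith
  have hc : 1 / (2 * (n:ℝ)) ≤ 1 / 2 := by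
    apply one_div_le_one_div_of_le
    · norm_num
    · linarith
  have hc0 : 0 < 1 / (2 * (n:ℝ)) := by positivity
  by_cases hfR : frob (J - B) = 0
  · have hR0 : J - B = 0 := frob_eq_zero hfR
    have hJB : J = B := by
      have := sub_eq_zero.1 hR0; exact this
    have hAAA : ∀ v : Fin n → ℝ, AAAupd B J v = B := by
      intro v
      rw [AAAupd, if_pos]
      rw [hR0, Matrix.zero_mulVec]
    simp only [hAAA]
    rw [integral_const]
    simp only [probReal_univ, smul_eq_mul, one_mul]
    have hJA : frob (J - A) = frob (B - A) := by rw [hJB]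
    rw [hJA]
    nlinarith [frob_nonneg (B - A)]
  · have hfpos : 0 < frob (J - B) := lt_of_le_of_ne (frob_nonneg _) (Ne.symm hfR)
    set F := frob (J - B) with hF
    set FB := frob (B - A) with hFB
    set FJ := frob (J - A) with hFJ
    have hmeas : AEStronglyMeasurable (fun v : Fin n → ℝ => frob (AAAupd B J v - A))
        (stdGaussianPi n) := (measurable_f B J A).aestronglyMeasurable
    have hint_f : Integrable (fun v : Fin n → ℝ => frob (AAAupd B J v - A))
        (stdGaussianPi n) := by
      refine Integrable.mono' (integrable_const (FJ + F)) hmeas (ae_of_all _ fun v => ?_)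
      rw [Real.norm_eq_abs, abs_of_nonneg (frob_nonneg _)]
      exact main_bound_all B J A v
    have hq_meas : Measurable fun v : Fin n → ℝ =>
        (∑ i, ((J - B).mulVec v i) ^ 2) / (∑ i, (v i) ^ 2) :=
      (Finset.measurable_sum _ fun i _ => (measurable_mulVec_entry _ i).pow_const 2).div
        (Finset.measurable_sum _ fun i _ => (measurable_pi_apply i).pow_const 2)
    have hq_int : Integrable (fun v : Fin n → ℝ =>
        (∑ i, ((J - B).mulVec v i) ^ 2) / (∑ i, (v i) ^ 2)) (stdGaussianPi n) := by
      refine Integrable.mono' (integrable_const (∑ i, ∑ j, ((J - B) i j) ^ 2))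
        hq_meas.aestronglyMeasurable (ae_of_all _ fun v => ?_)
      rw [Real.norm_eq_abs]
      rcases eq_or_ne (∑ i, (v i) ^ 2) 0 with h | h
      · rw [h, div_zero, abs_zero]; positivity
      · have hD : 0 < ∑ i, (v i) ^ 2 := lt_of_le_of_ne (by positivity) (Ne.symm h)
        rw [abs_of_nonneg (by positivity), div_le_iff₀ hD]
        exact alg_USD (J - B) v
    have hg_int : Integrable (fun v : Fin n → ℝ => FJ + F
        - (2 * F)⁻¹ * ((∑ i, ((J - B).mulVec v i) ^ 2) / (∑ i, (v i) ^ 2)))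
        (stdGaussianPi n) := (integrable_const _).sub (hq_int.const_mul _)
    have hmono : ∫ v, frob (AAAupd B J v - A) ∂(stdGaussianPi n)
        ≤ ∫ v, (FJ + F - (2 * F)⁻¹ * ((∑ i, ((J - B).mulVec v i) ^ 2) / (∑ i, (v i) ^ 2)))
            ∂(stdGaussianPi n) :=
      integral_mono_ae hint_f hg_int
        ((ae_sum_sq_ne hn).mono fun v hv => main_bound_ae B J A hfR v hv)
    have hgval : ∫ v, (FJ + F
          - (2 * F)⁻¹ * ((∑ i, ((J - B).mulVec v i) ^ 2) / (∑ i, (v i) ^ 2)))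
            ∂(stdGaussianPi n)
        = FJ + F - (2 * F)⁻¹ * ((∑ i, ∑ j, ((J - B) i j) ^ 2) / n) := by
      rw [integral_sub (integrable_const _) (hq_int.const_mul _), integral_const,
        integral_const_mul, integral_q hn (J - B)]
      simp [measure_univ]
    have hSF : (∑ i, ∑ j, ((J - B) i j) ^ 2) = F ^ 2 := (frob_sq (J - B)).symm
    have hkey : (2 * F)⁻¹ * ((∑ i, ∑ j, ((J - B) i j) ^ 2) / n) = F * (1 / (2 * (n:ℝ))) := by
      rw [hSF]
      field_simp
    have hRle : F ≤ FB + FJ := by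
      have hsplit : J - B = (J - A) - (B - A) := by abel
      rw [hF, hsplit]
      have := frob_sub_le (J - A) (B - A)
      rw [← hFB, ← hFJ] at this
      linarith
    have hfinal : FJ + F - F * (1 / (2 * (n:ℝ)))
        ≤ (1 - 1 / (2 * (n:ℝ))) * FB + (2 - 1 / (2 * (n:ℝ))) * FJ := by
      nlinarith [mul_nonneg (by linarith : (0:ℝ) ≤ 1 - 1 / (2 * (n:ℝ)))
        (by linarith : (0:ℝ) ≤ FB + FJ - F)]
    calc ∫ v, frob (AAAupd B J v - A) ∂(stdGaussianPi n)
        ≤ FJ + F - (2 * F)⁻¹ * ((∑ i, ∑ j, ((J - B) i j) ^ 2) / n) := by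
          rw [← hgval]; exact hmono
      _ = FJ + F - F * (1 / (2 * (n:ℝ))) := by rw [hkey]
      _ ≤ (1 - 1 / (2 * (n:ℝ))) * FB + (2 - 1 / (2 * (n:ℝ))) * FJ := hfinal

end main

end AAAProofAux

theorem stmt_16 {n : ℕ} (hn : 0 < n) (B J A : Matrix (Fin n) (Fin n) ℝ) :
    ∫ v, frob (AAAupd B J v - A) ∂(stdGaussianPi n) ≤
      (1 - 1 / (2 * (n : ℝ))) * frob (B - A) + (2 - 1 / (2 * (n : ℝ))) * frob (J - A) :=
  AAAProofAux.stmt_16_aux hn B J A
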